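/- arXiv:1112.5255 — 3 statements merged into one kernel-verified Lean document; each statement's English description precedes it below -/
import Mathlib

section
/- For every integer r ≥ 1, the positive real root φ_r of the equation x + x^{-r} = 2 with φ_r ≥ 1 satisfies φ_r < 2 - 2^{-r}. -/
theorem root_lt_two_sub (r : ℕ) (hr : 1 ≤ r) (x : ℝ) (hx : 1 ≤ x)
    (hroot : x + x ^ (-(r : ℤ)) = 2) :
    x < 2 - (2 : ℝ) ^ (-(r : ℤ)) := by
  have hx0 : (0:ℝ) < x := lt_of_lt_of_le one_pos hx
  have hpow : (0:ℝ) < x ^ (-(r : ℤ)) := zpow_pos hx0 _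
  have hx2 : x < 2 := by linarith
  have hlt : x ^ r < 2 ^ r := pow_lt_pow_left₀ hx2 (le_of_lt hx0) (by omega)
  have hinv : ((2:ℝ) ^ r)⁻¹ < (x ^ r)⁻¹ :=
    inv_strictAnti₀ (pow_pos hx0 r) hlt
  have h1 : x ^ (-(r : ℤ)) = (x ^ r)⁻¹ := by
    rw [zpow_neg, zpow_natCast]
  have h2 : (2:ℝ) ^ (-(r : ℤ)) = ((2:ℝ) ^ r)⁻¹ := by
    rw [zpow_neg, zpow_natCast]
  rw [h2]; rw [h1] at hroot
  linarith
end

section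
/- With F the r-step Fibonacci sequence, for all t ≥ 0, F_{t+2}/2^t < 2·(1 - 2^{-(r+1)})^t. -/
theorem fib_r_step_div_pow_lt (r : ℕ) (hr : 1 ≤ r) (F : ℤ → ℝ)
    (h0 : ∀ m : ℤ, m ≤ 0 → F m = 0) (h1 : F 1 = 1) (h2 : F 2 = 1)
    (hrec : ∀ m : ℤ, 3 ≤ m → F m = ∑ i ∈ Finset.Icc 1 r, F (m - i)) :
    ∀ t : ℕ, F (t + 2) / 2 ^ t < 2 * (1 - (2 : ℝ) ^ (-((r : ℤ) + 1))) ^ t := by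
  have h2pow : (2:ℝ) ≤ (2:ℝ)^r := by
    calc (2:ℝ) = 2^1 := by norm_num
    _ ≤ 2^r := pow_le_pow_right₀ (by norm_num) hr
  set c : ℝ := 2 - ((2:ℝ)^r)⁻¹ with hcdef
  clear_value c
  have hinv_pos : (0:ℝ) < ((2:ℝ)^r)⁻¹ := by positivity
  have hinv_le : ((2:ℝ)^r)⁻¹ ≤ 1/2 := by
    rw [inv_le_comm₀ (by positivity) (by norm_num)]
    linarith
  have hc1 : (3/2:ℝ) ≤ c := by rw [hcdef]; linarith
  have hc0 : (0:ℝ) < c := by linarith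
  have hc2 : c ≤ 2 := by rw [hcdef]; linarith
  have hcne : c ≠ 0 := ne_of_gt hc0
  -- key inequality 2 c^r ≤ c^(r+1) + 1
  have hcr : c ^ r ≤ 2 ^ r := pow_le_pow_left₀ hc0.le hc2 r
  have hkey : 2 * c ^ r ≤ c ^ (r+1) + 1 := by
    have h1' : ((2:ℝ)^r)⁻¹ * c ^ r ≤ 1 := inv_mul_le_one_of_le₀ hcr (by positivity)
    have hmul : c * c ^ r = 2 * c ^ r - ((2:ℝ)^r)⁻¹ * c ^ r := by
      rw [hcdef]; ring
    have : c ^ (r+1) = c * c ^ r := by ring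
    linarith
  -- geometric sum bound
  have hgeom : ∑ i ∈ Finset.Icc 1 r, (c⁻¹) ^ i ≤ 1 := by
    have hS : (∑ i ∈ Finset.range r, (c⁻¹) ^ i) * (c⁻¹ - 1) = (c⁻¹)^r - 1 :=
      geom_sum_mul c⁻¹ r
    have hsum : ∑ i ∈ Finset.Icc 1 r, (c⁻¹) ^ i
        = c⁻¹ * ∑ i ∈ Finset.range r, (c⁻¹) ^ i := by
      rw [← Finset.Ico_add_one_right_eq_Icc, Finset.sum_Ico_eq_sum_range, Finset.mul_sum]
      apply Finset.sum_congr rfl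
      intro i _
      rw [pow_add, pow_one]
    rw [hsum]
    have hx1 : c⁻¹ < 1 := by
      rw [inv_lt_one_iff₀]; right; linarith
    have hx0 : 0 < c⁻¹ := by positivity
    rw [← sub_nonneg]
    have hpos : 0 < 1 - c⁻¹ := by linarith
    have expand : (1 - c⁻¹ * ∑ i ∈ Finset.range r, (c⁻¹) ^ i) * (1 - c⁻¹)
        = 1 - 2*c⁻¹ + c⁻¹ * (c⁻¹)^r := by
      have : c⁻¹ * ((∑ i ∈ Finset.range r, (c⁻¹) ^ i) * (c⁻¹ - 1))
          = c⁻¹ * ((c⁻¹)^r - 1) := by rw [hS]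
      nlinarith [this]
    have hnn : 0 ≤ 1 - 2*c⁻¹ + c⁻¹ * (c⁻¹)^r := by
      have hc' : 0 < c ^ (r+1) := pow_pos hc0 _
      have heq : 1 - 2*c⁻¹ + c⁻¹ * (c⁻¹)^r
          = (c ^ (r+1) + 1 - 2 * c^r) / c^(r+1) := by
        rw [inv_pow]
        field_simp
        ring
      rw [heq]
      apply div_nonneg _ hc'.le
      linarith
    nlinarith [hnn, expand, hpos]
  -- main bound by strong induction
  have key : ∀ n : ℕ, F ((n:ℤ) + 1) ≤ c ^ n := by
    intro n
    induction n using Nat.strong_induction_on with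
    | _ n ih =>
      rcases n with _ | _ | k
      · simpa using h1.le
      · have harg : ((1:ℕ):ℤ) + 1 = 2 := by norm_num
        rw [harg, h2, pow_one]
        linarith
      · have hm : (3:ℤ) ≤ ((k+2:ℕ):ℤ) + 1 := by push_cast; omega
        rw [hrec _ hm]
        have hterm : ∀ i ∈ Finset.Icc 1 r,
            F (((k+2:ℕ):ℤ) + 1 - i) ≤ c ^ (((k+2:ℕ):ℤ) - i) := by
          intro i hi
          simp only [Finset.mem_Icc] at hi
          by_cases hik : i ≤ k + 2
          · have harg : ((k+2:ℕ):ℤ) + 1 - i = ((k + 2 - i : ℕ):ℤ) + 1 := by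
              push_cast [hik]; ring
            have hexp : ((k+2:ℕ):ℤ) - i = ((k + 2 - i : ℕ):ℤ) := by
              push_cast [hik]; ring
            rw [harg, hexp, zpow_natCast]
            exact ih _ (by omega)
          · have : F (((k+2:ℕ):ℤ) + 1 - i) = 0 := by
              apply h0; push_cast; omega
            rw [this]
            exact (zpow_pos hc0 _).le
        calc ∑ i ∈ Finset.Icc 1 r, F (((k+2:ℕ):ℤ) + 1 - i)
            ≤ ∑ i ∈ Finset.Icc 1 r, c ^ (((k+2:ℕ):ℤ) - i) :=
              Finset.sum_le_sum hterm
          _ = c ^ (k+2) * ∑ i ∈ Finset.Icc 1 r, (c⁻¹) ^ i := by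
              rw [Finset.mul_sum]
              apply Finset.sum_congr rfl
              intro i _
              rw [zpow_sub₀ hcne, zpow_natCast, zpow_natCast, div_eq_mul_inv,
                inv_pow]
          _ ≤ c ^ (k+2) * 1 := by
              apply mul_le_mul_of_nonneg_left hgeom (by positivity)
          _ = c ^ (k+2) := by ring
  -- conclude
  intro t
  set q : ℝ := 1 - (2:ℝ) ^ (-((r:ℤ) + 1)) with hqdef
  clear_value q
  have hzq : (2:ℝ) ^ (-((r:ℤ) + 1)) = ((2:ℝ)^(r+1))⁻¹ := by
    rw [show ((r:ℤ) + 1) = ((r+1:ℕ):ℤ) by push_cast; ring, zpow_neg, zpow_natCast]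
  have hq0 : 0 < q := by
    have h21 : (2:ℝ) ≤ 2^(r+1) := by
      calc (2:ℝ) = 2^1 := by norm_num
      _ ≤ 2^(r+1) := pow_le_pow_right₀ (by norm_num) (by omega)
    have : ((2:ℝ)^(r+1))⁻¹ ≤ 1/2 := by
      rw [inv_le_comm₀ (by positivity) (by norm_num)]
      exact le_trans (by norm_num) h21
    rw [hqdef, hzq]; linarith
  have hq1 : q < 1 := by
    rw [hqdef, hzq]
    have : 0 < ((2:ℝ)^(r+1))⁻¹ := by positivity
    linarith
  have hcq : c = 2 * q := by
    rw [hqdef, hzq, hcdef]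
    have : ((2:ℝ)^(r+1)) = 2 * 2^r := by ring
    rw [this]
    field_simp
  have hk := key (t+1)
  have hcast : ((t:ℤ) + 2) = (((t+1:ℕ)):ℤ) + 1 := by push_cast; ring
  rw [hcast]
  have hF : F ((((t+1:ℕ)):ℤ) + 1) ≤ 2^(t+1) * q^(t+1) := by
    calc F ((((t+1:ℕ)):ℤ) + 1) ≤ c ^ (t+1) := hk
    _ = 2^(t+1) * q^(t+1) := by rw [hcq, mul_pow]
  have hqt : 0 < q ^ t := pow_pos hq0 t
  have h2t : (0:ℝ) < 2 ^ t := by positivity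
  rw [div_lt_iff₀ h2t]
  calc F ((((t+1:ℕ)):ℤ) + 1) ≤ 2^(t+1) * q^(t+1) := hF
    _ = (2 * q^t * 2^t) * q := by ring
    _ < (2 * q^t * 2^t) * 1 :=
        mul_lt_mul_of_pos_left hq1 (by positivity)
    _ = (2 * q^t) * 2^t := by ring
end

section
/- Consider a Markov chain on states {0, 1, ..., r} where state 0 is absorbing, and from each state k ≥ 1 the chain moves to state k-1 with probability 1/2 and to state r with probability 1/2. Then starting from any state, the probability of not being absorbed within t steps is at most 2·(1 - 2^{-(r+1)})^t. -/
theorem markov_not_absorbed_bound (r : ℕ) (hr : 1 ≤ r) (f : ℕ → ℕ → ℝ)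
    (habs : ∀ t, f t 0 = 0)
    (hinit : ∀ k, 1 ≤ k → k ≤ r → f 0 k = 1)
    (hrec : ∀ t k, 1 ≤ k → k ≤ r → f (t + 1) k = (f t (k - 1) + f t r) / 2) :
    ∀ t : ℕ, ∀ k ≤ r, f t k ≤ 2 * (1 - (2 : ℝ) ^ (-((r : ℤ) + 1))) ^ t := by
  have hP : (0:ℝ) < 2 ^ r := by positivity
  have hε : (2:ℝ) ^ (-((r:ℤ)+1)) = ((2:ℝ) ^ (r+1))⁻¹ := by
    rw [show (-((r:ℤ)+1)) = -((r+1:ℕ):ℤ) by push_cast; ring, zpow_neg, zpow_natCast]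
  set a : ℝ := 2 ^ (r+1) / (2 ^ r + 1) with ha
  set lam : ℝ := 1 - ((2:ℝ) ^ (r+1))⁻¹ with hlam
  have hlam0 : 0 ≤ lam := by
    have h1 : (1:ℝ) ≤ 2 ^ (r+1) := one_le_pow₀ (by norm_num)
    have : ((2:ℝ) ^ (r+1))⁻¹ ≤ 1 := inv_le_one_of_one_le₀ h1
    simp only [hlam]; linarith
  have ha_pos : 0 < a := by positivity
  have ha_le : a ≤ 2 := by
    rw [ha, div_le_iff₀ (by positivity)]
    have : (2:ℝ) ^ (r+1) = 2 * 2 ^ r := by ring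
    linarith
  have key : ∀ t, ∀ k, k ≤ r → f t k ≤ (2 - a * ((2:ℝ) ^ k)⁻¹) * lam ^ t := by
    intro t
    induction t with
    | zero =>
      intro k hk
      rcases Nat.eq_zero_or_pos k with h0 | h1
      · subst h0
        rw [habs]
        simp only [pow_zero, mul_one]
        norm_num
        linarith
      · rw [hinit k h1 hk]
        simp only [pow_zero, mul_one]
        have hQ : (2:ℝ) ≤ 2 ^ k := by
          calc (2:ℝ) = 2 ^ 1 := (pow_one 2).symm
          _ ≤ 2 ^ k := pow_le_pow_right₀ (by norm_num) h1
        have hQ0 : (0:ℝ) < 2 ^ k := by positivity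
        have : a * ((2:ℝ) ^ k)⁻¹ ≤ 2 * (2:ℝ)⁻¹ := by
          apply mul_le_mul ha_le _ (by positivity) (by norm_num)
          exact inv_anti₀ (by norm_num) hQ
        linarith [this]
    | succ t ih =>
      intro k hk
      rcases Nat.eq_zero_or_pos k with h0 | h1
      · subst h0
        rw [habs]
        apply mul_nonneg _ (pow_nonneg hlam0 _)
        norm_num
        linarith
      · rw [hrec t k h1 hk]
        obtain ⟨j, rfl⟩ : ∃ j, k = j + 1 := ⟨k - 1, (Nat.succ_pred_eq_of_pos h1).symm⟩
        have hkm : j + 1 - 1 = j := rfl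
        have h1' := ih j (le_trans (Nat.le_succ j) hk)
        have h2' := ih r le_rfl
        rw [hkm]
        have hQ0 : (0:ℝ) < 2 ^ j := by positivity
        -- key arithmetic inequality
        have hQP : (2:ℝ) * 2 ^ j ≤ 2 ^ r := by
          have : (2:ℝ) ^ (j+1) ≤ 2 ^ r := pow_le_pow_right₀ (by norm_num) hk
          calc (2:ℝ) * 2 ^ j = 2 ^ (j+1) := by ring
          _ ≤ 2 ^ r := this
        have aux : ∀ P Q : ℝ, 0 < P → 0 < Q → 2*Q ≤ P →
            ((2 - (2*P/(P+1)) * Q⁻¹) + (2 - (2*P/(P+1)) * P⁻¹)) / 2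
              ≤ (2 - (2*P/(P+1)) * (2*Q)⁻¹) * (1 - (2*P)⁻¹) := by
          intro P Q hP hQ h
          have hP1 : (0:ℝ) < P + 1 := by linarith
          rw [← sub_nonneg]
          have heq : (2 - (2*P/(P+1)) * (2*Q)⁻¹) * (1 - (2*P)⁻¹)
              - ((2 - (2*P/(P+1)) * Q⁻¹) + (2 - (2*P/(P+1)) * P⁻¹)) / 2
              = (P - 2*Q) / (2*P*Q*(P+1)) := by
            field_simp
            ring
          rw [heq]
          exact div_nonneg (by linarith) (by positivity)
        have hkey : ((2 - a * ((2:ℝ) ^ j)⁻¹) + (2 - a * ((2:ℝ) ^ r)⁻¹)) / 2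
            ≤ (2 - a * ((2:ℝ) ^ (j+1))⁻¹) * lam := by
          rw [ha, hlam, show (2:ℝ) ^ (r+1) = 2 * 2 ^ r from by ring,
            show (2:ℝ) ^ (j+1) = 2 * 2 ^ j from by ring]
          exact aux (2 ^ r) (2 ^ j) hP hQ0 hQP
        have hsum : f t j + f t r
            ≤ ((2 - a * ((2:ℝ) ^ j)⁻¹) + (2 - a * ((2:ℝ) ^ r)⁻¹)) * lam ^ t := by
          rw [add_mul]; exact add_le_add h1' h2'
        have hlt : (0:ℝ) ≤ lam ^ t := pow_nonneg hlam0 _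
        calc (f t j + f t r) / 2
            ≤ ((2 - a * ((2:ℝ) ^ j)⁻¹) + (2 - a * ((2:ℝ) ^ r)⁻¹)) * lam ^ t / 2 := by
              linarith
          _ = ((2 - a * ((2:ℝ) ^ j)⁻¹) + (2 - a * ((2:ℝ) ^ r)⁻¹)) / 2 * lam ^ t := by ring
          _ ≤ (2 - a * ((2:ℝ) ^ (j+1))⁻¹) * lam * lam ^ t :=
              mul_le_mul_of_nonneg_right hkey hlt
          _ = (2 - a * ((2:ℝ) ^ (j+1))⁻¹) * lam ^ (t+1) := by ring
  intro t k hk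
  have h := key t k hk
  have hc : 2 - a * ((2:ℝ) ^ k)⁻¹ ≤ 2 := by
    have : 0 ≤ a * ((2:ℝ) ^ k)⁻¹ := by positivity
    linarith
  calc f t k ≤ (2 - a * ((2:ℝ) ^ k)⁻¹) * lam ^ t := h
    _ ≤ 2 * lam ^ t := mul_le_mul_of_nonneg_right hc (pow_nonneg hlam0 _)
    _ = 2 * (1 - (2 : ℝ) ^ (-((r : ℤ) + 1))) ^ t := by rw [hε]
end
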